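/- Fix γ ∈ (0, 1) and τ ∈ [0, 1 − γ]. Suppose λ ≥ 0 satisfies the fixed-point equation λ² · ∫ 1/(s + λ)² dMP(γ)(s) = τ. Then γ · ∫ s/(s + λ)² dMP(γ)(s) ≥ (γ/(1 − γ)) · (1 − √(τ/(1 − γ)))². -/

import Mathlib

open MeasureTheory Real Set


/-- The Marchenko–Pastur measure with aspect ratio `γ`: a point mass of weight
`max 0 (1 - 1/γ)` at `0` plus the absolutely continuous part with density
`s ↦ √((b - s)(s - a)) / (2πγs)` on `[a, b]`, where `a = (1 - √γ)²`, `b = (1 + √γ)²`. -/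
noncomputable def MP (γ : ℝ) : Measure ℝ :=
  ENNReal.ofReal (max 0 (1 - 1 / γ)) • Measure.dirac 0 +
    volume.withDensity
      (Set.indicator (Set.Icc ((1 - Real.sqrt γ) ^ 2) ((1 + Real.sqrt γ) ^ 2))
        (fun s => ENNReal.ofReal
          (Real.sqrt (((1 + Real.sqrt γ) ^ 2 - s) * (s - (1 - Real.sqrt γ) ^ 2)) /
            (2 * Real.pi * γ * s))))

noncomputable def G2 (a b s : ℝ) : ℝ :=
  -Real.arcsin ((2*s-(a+b))/(b-a)) + (a+b)/(2*Real.sqrt (a*b)) * Real.arcsin (((a+b)*s-2*a*b)/((b-a)*s)) - Real.sqrt ((b-s)*(s-a))/s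

lemma G2_deriv {a b : ℝ} (ha : 0 < a) (hab : a < b) {s : ℝ} (hs : s ∈ Set.Ioo a b) :
    HasDerivAt (G2 a b) (Real.sqrt ((b-s)*(s-a)) / s^2) s := by
  obtain ⟨hs1, hs2⟩ := hs
  have hs0 : 0 < s := lt_trans ha hs1
  have hba : 0 < b - a := by linarith
  have hQ : 0 < (b-s)*(s-a) := mul_pos (by linarith) (by linarith)
  set q := Real.sqrt ((b-s)*(s-a)) with hqdef
  have hq0 : 0 < q := Real.sqrt_pos.mpr hQ
  have hq2 : q^2 = (b-s)*(s-a) := Real.sq_sqrt hQ.le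
  have hab0 : 0 < a*b := mul_pos ha (ha.trans hab)
  set r := Real.sqrt (a*b) with hrdef
  have hr0 : 0 < r := Real.sqrt_pos.mpr hab0
  have hr2 : r^2 = a*b := Real.sq_sqrt hab0.le
  have hQd : HasDerivAt (fun s => (b-s)*(s-a)) (a+b-2*s) s := by
    have h : HasDerivAt (fun s : ℝ => (b-s)*(s-a)) (-1 * (s-a) + (b-s)*1) s :=
      ((hasDerivAt_id s).const_sub b).mul ((hasDerivAt_id s).sub_const a)
    convert h using 1; ring
  have hsqQ : HasDerivAt (fun s => Real.sqrt ((b-s)*(s-a))) ((a+b-2*s)/(2*q)) s :=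
    hQd.sqrt hQ.ne'
  have hu0d : HasDerivAt (fun s => (2*s-(a+b))/(b-a)) (2/(b-a)) s := by
    have h : HasDerivAt (fun s : ℝ => (2*s-(a+b))/(b-a)) (2*1/(b-a)) s :=
      (((hasDerivAt_id s).const_mul 2).sub_const (a+b)).div_const (b-a)
    convert h using 1; ring
  have hu0lt : (2*s-(a+b))/(b-a) < 1 := by rw [div_lt_one hba]; linarith
  have hu0gt : -1 < (2*s-(a+b))/(b-a) := by rw [lt_div_iff₀ hba]; linarith
  have hsqrt_u0 : Real.sqrt (1 - ((2*s-(a+b))/(b-a))^2) = 2/(b-a) * q := by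
    rw [show 1 - ((2*s-(a+b))/(b-a))^2 = (2/(b-a))^2 * ((b-s)*(s-a)) by
      field_simp; ring]
    rw [Real.sqrt_mul (sq_nonneg _), Real.sqrt_sq (by positivity)]
  have harc0 : HasDerivAt (fun s => Real.arcsin ((2*s-(a+b))/(b-a))) (1/q) s := by
    have h := (Real.hasDerivAt_arcsin (ne_of_gt hu0gt) (ne_of_lt hu0lt)).comp s hu0d
    refine h.congr_deriv ?_
    rw [hsqrt_u0]; field_simp
  have hden : (b-a)*s ≠ 0 := by positivity
  have hud : HasDerivAt (fun s => ((a+b)*s-2*a*b)/((b-a)*s)) (2*a*b/((b-a)*s^2)) s := by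
    have h1 : HasDerivAt (fun s : ℝ => (a+b)*s-2*a*b) ((a+b)*1) s :=
      ((hasDerivAt_id s).const_mul (a+b)).sub_const (2*a*b)
    have h2 : HasDerivAt (fun s : ℝ => (b-a)*s) ((b-a)*1) s :=
      (hasDerivAt_id s).const_mul (b-a)
    have h := h1.div h2 hden
    refine h.congr_deriv ?_
    field_simp; ring
  have hult : ((a+b)*s-2*a*b)/((b-a)*s) < 1 := by
    rw [div_lt_one (by positivity)]; nlinarith
  have hugt : -1 < ((a+b)*s-2*a*b)/((b-a)*s) := by
    rw [lt_div_iff₀ (by positivity)]; nlinarith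
  have hsqrt_u : Real.sqrt (1 - (((a+b)*s-2*a*b)/((b-a)*s))^2) = 2/((b-a)*s) * (r*q) := by
    rw [show 1 - (((a+b)*s-2*a*b)/((b-a)*s))^2 = (2/((b-a)*s))^2 * ((a*b)*((b-s)*(s-a))) by
      field_simp; ring]
    rw [Real.sqrt_mul (sq_nonneg _), Real.sqrt_sq (by positivity), Real.sqrt_mul hab0.le]
  have harcu : HasDerivAt (fun s => Real.arcsin (((a+b)*s-2*a*b)/((b-a)*s))) (r/(s*q)) s := by
    have h := (Real.hasDerivAt_arcsin (ne_of_gt hugt) (ne_of_lt hult)).comp s hud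
    refine h.congr_deriv ?_
    rw [hsqrt_u]
    have e : 1 / (2/((b-a)*s) * (r*q)) * (2*a*b/((b-a)*s^2)) = (a*b)/(r*q*s) := by
      field_simp
    rw [e, ← hr2]
    field_simp
  have hquot : HasDerivAt (fun s => Real.sqrt ((b-s)*(s-a))/s) (((a+b-2*s)/(2*q)*s - q*1)/s^2) s := by
    have h : HasDerivAt (fun s : ℝ => Real.sqrt ((b-s)*(s-a))/s)
        (((a+b-2*s)/(2*q)*s - Real.sqrt ((b-s)*(s-a))*1)/s^2) s :=
      hsqQ.div (hasDerivAt_id s) hs0.ne'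
    convert h using 2
  have H := ((harc0.neg.add (harcu.const_mul ((a+b)/(2*r)))).sub hquot)
  refine H.congr_deriv ?_
  field_simp
  ring

lemma contQ {a b : ℝ} : Continuous (fun s => Real.sqrt ((b-s)*(s-a))) :=
  Real.continuous_sqrt.comp (by continuity)

lemma int2 {a b : ℝ} (ha : 0 < a) (hab : a < b) :
    ∫ s in a..b, Real.sqrt ((b-s)*(s-a)) / s^2
      = Real.pi * (a+b) / (2*Real.sqrt (a*b)) - Real.pi := by
  have hb : 0 < b := ha.trans hab
  have hba : 0 < b - a := by linarith
  have hpos : ∀ s ∈ Set.Icc a b, (0:ℝ) < s := fun s hs => lt_of_lt_of_le ha hs.1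
  have hs0 : ∀ s ∈ Set.Icc a b, s ≠ 0 := fun s hs => (hpos s hs).ne'
  have hcont : ContinuousOn (G2 a b) (Set.Icc a b) := by
    unfold G2
    apply ContinuousOn.sub
    apply ContinuousOn.add
    · exact (Real.continuous_arcsin.comp (by continuity)).continuousOn.neg
    · exact continuousOn_const.mul (Real.continuous_arcsin.comp_continuousOn
        (ContinuousOn.div (by fun_prop) (by fun_prop)
          (fun s hs => by have := hpos s hs; positivity)))
    · exact ContinuousOn.div contQ.continuousOn continuousOn_id hs0
  have hint : IntervalIntegrable (fun s => Real.sqrt ((b-s)*(s-a)) / s^2) MeasureTheory.volume a b := by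
    apply ContinuousOn.intervalIntegrable
    rw [Set.uIcc_of_le hab.le]
    exact ContinuousOn.div contQ.continuousOn (by fun_prop)
      (fun s hs => by have := lt_of_lt_of_le ha hs.1; positivity)
  rw [intervalIntegral.integral_eq_sub_of_hasDerivAt_of_le hab.le hcont
    (fun x hx => G2_deriv ha hab hx) hint]
  have hb1 : (2*b-(a+b))/(b-a) = (1:ℝ) := by field_simp; ring
  have ha1 : (2*a-(a+b))/(b-a) = (-1:ℝ) := by field_simp; ring
  have hb2 : ((a+b)*b-2*a*b)/((b-a)*b) = (1:ℝ) := by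
    rw [div_eq_one_iff_eq (by positivity)]; ring
  have ha2 : ((a+b)*a-2*a*b)/((b-a)*a) = (-1:ℝ) := by
    rw [div_eq_iff (by positivity)]; ring
  unfold G2
  rw [hb1, ha1, hb2, ha2, Real.arcsin_one, Real.arcsin_neg_one]
  simp only [sub_self, mul_zero, zero_mul, Real.sqrt_zero, zero_div]
  have : Real.sqrt (a*b) > 0 := Real.sqrt_pos.mpr (by positivity)
  field_simp
  ring

noncomputable def G3 (a b s : ℝ) : ℝ :=
  (b-a)^2/(8*a*b*Real.sqrt (a*b)) * Real.arcsin (((a+b)*s-2*a*b)/((b-a)*s))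
    + (a+b)/(4*a*b) * (Real.sqrt ((b-s)*(s-a))/s)
    - (1/2) * (Real.sqrt ((b-s)*(s-a))/s^2)

lemma G3_deriv {a b : ℝ} (ha : 0 < a) (hab : a < b) {s : ℝ} (hs : s ∈ Set.Ioo a b) :
    HasDerivAt (G3 a b) (Real.sqrt ((b-s)*(s-a)) / s^3) s := by
  obtain ⟨hs1, hs2⟩ := hs
  have hs0 : 0 < s := lt_trans ha hs1
  have hba : 0 < b - a := by linarith
  have hQ : 0 < (b-s)*(s-a) := mul_pos (by linarith) (by linarith)
  set q := Real.sqrt ((b-s)*(s-a)) with hqdef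
  have hq0 : 0 < q := Real.sqrt_pos.mpr hQ
  have hq2 : q^2 = (b-s)*(s-a) := Real.sq_sqrt hQ.le
  have hab0 : 0 < a*b := mul_pos ha (ha.trans hab)
  set r := Real.sqrt (a*b) with hrdef
  have hr0 : 0 < r := Real.sqrt_pos.mpr hab0
  have hr2 : r^2 = a*b := Real.sq_sqrt hab0.le
  have hQd : HasDerivAt (fun s => (b-s)*(s-a)) (a+b-2*s) s := by
    have h : HasDerivAt (fun s : ℝ => (b-s)*(s-a)) (-1 * (s-a) + (b-s)*1) s :=
      ((hasDerivAt_id s).const_sub b).mul ((hasDerivAt_id s).sub_const a)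
    convert h using 1; ring
  have hsqQ : HasDerivAt (fun s => Real.sqrt ((b-s)*(s-a))) ((a+b-2*s)/(2*q)) s :=
    hQd.sqrt hQ.ne'
  have hden : (b-a)*s ≠ 0 := by positivity
  have hud : HasDerivAt (fun s => ((a+b)*s-2*a*b)/((b-a)*s)) (2*a*b/((b-a)*s^2)) s := by
    have h1 : HasDerivAt (fun s : ℝ => (a+b)*s-2*a*b) ((a+b)*1) s :=
      ((hasDerivAt_id s).const_mul (a+b)).sub_const (2*a*b)
    have h2 : HasDerivAt (fun s : ℝ => (b-a)*s) ((b-a)*1) s :=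
      (hasDerivAt_id s).const_mul (b-a)
    have h := h1.div h2 hden
    refine h.congr_deriv ?_
    field_simp; ring
  have hult : ((a+b)*s-2*a*b)/((b-a)*s) < 1 := by
    rw [div_lt_one (by positivity)]; nlinarith
  have hugt : -1 < ((a+b)*s-2*a*b)/((b-a)*s) := by
    rw [lt_div_iff₀ (by positivity)]; nlinarith
  have hsqrt_u : Real.sqrt (1 - (((a+b)*s-2*a*b)/((b-a)*s))^2) = 2/((b-a)*s) * (r*q) := by
    rw [show 1 - (((a+b)*s-2*a*b)/((b-a)*s))^2 = (2/((b-a)*s))^2 * ((a*b)*((b-s)*(s-a))) by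
      field_simp; ring]
    rw [Real.sqrt_mul (sq_nonneg _), Real.sqrt_sq (by positivity), Real.sqrt_mul hab0.le]
  have harcu : HasDerivAt (fun s => Real.arcsin (((a+b)*s-2*a*b)/((b-a)*s))) (r/(s*q)) s := by
    have h := (Real.hasDerivAt_arcsin (ne_of_gt hugt) (ne_of_lt hult)).comp s hud
    refine h.congr_deriv ?_
    rw [hsqrt_u]
    have e : 1 / (2/((b-a)*s) * (r*q)) * (2*a*b/((b-a)*s^2)) = (a*b)/(r*q*s) := by
      field_simp
    rw [e, ← hr2]
    field_simp
  have ha' : a ≠ 0 := ha.ne'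
  have hb' : b ≠ 0 := (ha.trans hab).ne'
  have hs' : s ≠ 0 := hs0.ne'
  have hq' : q ≠ 0 := hq0.ne'
  have hr' : r ≠ 0 := hr0.ne'
  have hquot1 : HasDerivAt (fun s => Real.sqrt ((b-s)*(s-a))/s) ((2*a*b-(a+b)*s)/(2*q*s^2)) s := by
    have h : HasDerivAt (fun s : ℝ => Real.sqrt ((b-s)*(s-a))/s)
        (((a+b-2*s)/(2*q)*s - Real.sqrt ((b-s)*(s-a))*1)/s^2) s :=
      hsqQ.div (hasDerivAt_id s) hs0.ne'
    convert h using 1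
    have e : ((a+b-2*s)/(2*q)*s - Real.sqrt ((b-s)*(s-a))*1)/s^2
        = ((a+b-2*s)*s - 2*q^2)/(2*q*s^2) := by
      rw [← hqdef]; field_simp
    rw [e, show (a+b-2*s)*s - 2*q^2 = 2*a*b-(a+b)*s by rw [hq2]; ring]
  have hsq : HasDerivAt (fun s : ℝ => s^2) (2*s) s := by
    simpa using hasDerivAt_pow 2 s
  have hquot2 : HasDerivAt (fun s => Real.sqrt ((b-s)*(s-a))/s^2) ((2*s^2-3*(a+b)*s+4*a*b)/(2*q*s^3)) s := by
    have h : HasDerivAt (fun s : ℝ => Real.sqrt ((b-s)*(s-a))/s^2)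
        (((a+b-2*s)/(2*q)*s^2 - Real.sqrt ((b-s)*(s-a))*(2*s))/(s^2)^2) s :=
      hsqQ.div hsq (by positivity)
    convert h using 1
    have e : ((a+b-2*s)/(2*q)*s^2 - Real.sqrt ((b-s)*(s-a))*(2*s))/(s^2)^2
        = ((a+b-2*s)*s^2 - 4*q^2*s)/(2*q*s^4) := by
      rw [← hqdef]; field_simp; ring
    rw [e, show (a+b-2*s)*s^2 - 4*q^2*s = (2*s^2-3*(a+b)*s+4*a*b)*s by rw [hq2]; ring]
    field_simp
  have H := ((harcu.const_mul ((b-a)^2/(8*a*b*r))).add (hquot1.const_mul ((a+b)/(4*a*b)))).sub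
    (hquot2.const_mul (1/2))
  refine H.congr_deriv ?_
  have e1 : (b-a)^2/(8*a*b*r) * (r/(s*q)) + (a+b)/(4*a*b) * ((2*a*b-(a+b)*s)/(2*q*s^2))
      - 1/2 * ((2*s^2-3*(a+b)*s+4*a*b)/(2*q*s^3))
      = ((b-a)^2*s^2 + (a+b)*(2*a*b-(a+b)*s)*s - a*b*(2*s^2-3*(a+b)*s+4*a*b)*2)/(8*a*b*q*s^3) := by
    field_simp; ring
  rw [e1, show (b-a)^2*s^2 + (a+b)*(2*a*b-(a+b)*s)*s - a*b*(2*s^2-3*(a+b)*s+4*a*b)*2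
      = 8*a*b*q^2 by rw [hq2]; ring]
  field_simp

lemma int3 {a b : ℝ} (ha : 0 < a) (hab : a < b) :
    ∫ s in a..b, Real.sqrt ((b-s)*(s-a)) / s^3
      = Real.pi * (b-a)^2 / (8*a*b*Real.sqrt (a*b)) := by
  have hb : 0 < b := ha.trans hab
  have hba : 0 < b - a := by linarith
  have hpos : ∀ s ∈ Set.Icc a b, (0:ℝ) < s := fun s hs => lt_of_lt_of_le ha hs.1
  have hs0 : ∀ s ∈ Set.Icc a b, s ≠ 0 := fun s hs => (hpos s hs).ne'
  have hcont : ContinuousOn (G3 a b) (Set.Icc a b) := by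
    unfold G3
    apply ContinuousOn.sub
    apply ContinuousOn.add
    · exact continuousOn_const.mul (Real.continuous_arcsin.comp_continuousOn
        (ContinuousOn.div (by fun_prop) (by fun_prop)
          (fun s hs => by have := hpos s hs; positivity)))
    · exact continuousOn_const.mul (ContinuousOn.div contQ.continuousOn continuousOn_id hs0)
    · exact continuousOn_const.mul (ContinuousOn.div contQ.continuousOn (by fun_prop)
        (fun s hs => by have := hpos s hs; positivity))
  have hint : IntervalIntegrable (fun s => Real.sqrt ((b-s)*(s-a)) / s^3) MeasureTheory.volume a b := by
    apply ContinuousOn.intervalIntegrable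
    rw [Set.uIcc_of_le hab.le]
    exact ContinuousOn.div contQ.continuousOn (by fun_prop)
      (fun s hs => by have := lt_of_lt_of_le ha hs.1; positivity)
  rw [intervalIntegral.integral_eq_sub_of_hasDerivAt_of_le hab.le hcont
    (fun x hx => G3_deriv ha hab hx) hint]
  have hb2 : ((a+b)*b-2*a*b)/((b-a)*b) = (1:ℝ) := by
    rw [div_eq_one_iff_eq (by positivity)]; ring
  have ha2 : ((a+b)*a-2*a*b)/((b-a)*a) = (-1:ℝ) := by
    rw [div_eq_iff (by positivity)]; ring
  unfold G3
  rw [hb2, ha2, Real.arcsin_one, Real.arcsin_neg_one]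
  simp only [sub_self, mul_zero, zero_mul, Real.sqrt_zero, zero_div]
  have hr : Real.sqrt (a*b) > 0 := Real.sqrt_pos.mpr (by positivity)
  field_simp
  ring

lemma cs_ineq (ν : Measure ℝ) (f g : ℝ → ℝ)
    (hff : Integrable (fun s => f s * f s) ν) (hgg : Integrable (fun s => g s * g s) ν)
    (hfg : Integrable (fun s => f s * g s) ν) :
    (∫ s, f s * g s ∂ν)^2 ≤ (∫ s, f s * f s ∂ν) * (∫ s, g s * g s ∂ν) := by
  set A := ∫ s, f s * g s ∂ν with hA
  set B := ∫ s, g s * g s ∂ν with hB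
  set F := ∫ s, f s * f s ∂ν with hF
  have hB0 : 0 ≤ B := by
    rw [hB]; exact integral_nonneg (fun s => mul_self_nonneg _)
  rcases eq_or_lt_of_le hB0 with hB0' | hB0'
  · have hgg0 : (fun s => g s * g s) =ᵐ[ν] 0 :=
      (integral_eq_zero_iff_of_nonneg (fun s => mul_self_nonneg (g s)) hgg).mp hB0'.symm
    have hA0 : A = 0 := by
      rw [hA, show (∫ s, f s * g s ∂ν) = ∫ s, (0:ℝ) ∂ν from integral_congr_ae (by
        filter_upwards [hgg0] with s hs
        have hgs : g s = 0 := mul_self_eq_zero.mp hs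
        simp [hgs])]
      simp
    rw [hA0, ← hB0']
    simp
  · have h0 : 0 ≤ ∫ s, (B * f s - A * g s)^2 ∂ν := integral_nonneg (fun s => sq_nonneg _)
    have hexp : ∫ s, (B * f s - A * g s)^2 ∂ν = B^2*F - 2*A*B*A + A^2*B := by
      have e : (fun s => (B * f s - A * g s)^2)
          = fun s => (B^2*(f s * f s) - (2*A*B)*(f s * g s)) + A^2*(g s * g s) := by
        funext s; ring
      have i3 : Integrable (fun s => B^2*(f s * f s)) ν := hff.const_mul _
      have i4 : Integrable (fun s => (2*A*B)*(f s * g s)) ν := hfg.const_mul _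
      have i1 : Integrable (fun s => B^2*(f s * f s) - (2*A*B)*(f s * g s)) ν := i3.sub i4
      have i2 : Integrable (fun s => A^2*(g s * g s)) ν := hgg.const_mul _
      rw [e, integral_add i1 i2, integral_sub i3 i4,
        integral_const_mul, integral_const_mul, integral_const_mul, ← hA, ← hB, ← hF]
    nlinarith [h0, hexp, hB0']

lemma MP_transfer (γ : ℝ) (hγ0 : 0 < γ) (hγ1 : γ < 1) (f : ℝ → ℝ) :
    ∫ s, f s ∂(MP γ)
      = ∫ s in Set.Icc ((1 - Real.sqrt γ)^2) ((1 + Real.sqrt γ)^2),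
          (Real.sqrt (((1 + Real.sqrt γ)^2 - s) * (s - (1 - Real.sqrt γ)^2))
            / (2 * Real.pi * γ * s)) * f s ∂volume := by
  set A := (1 - Real.sqrt γ)^2 with hAdef
  set B := (1 + Real.sqrt γ)^2 with hBdef
  set ρ : ℝ → ℝ := fun s => Real.sqrt ((B - s) * (s - A)) / (2 * Real.pi * γ * s) with hρdef
  have hg1 : Real.sqrt γ < 1 := by
    rw [show (1:ℝ) = Real.sqrt 1 by simp]
    exact Real.sqrt_lt_sqrt hγ0.le hγ1
  have hA0 : 0 < A := by
    have h1 : 0 < 1 - Real.sqrt γ := by linarith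
    positivity
  have hρnn : ∀ s, 0 ≤ (Set.Icc A B).indicator ρ s := by
    intro s
    apply Set.indicator_nonneg
    intro s hs
    have hs0 : 0 < s := lt_of_lt_of_le hA0 hs.1
    have := Real.pi_pos
    positivity
  have hρmeas : Measurable ρ := by
    apply Measurable.div
    · exact (Real.continuous_sqrt.comp (by continuity)).measurable
    · exact (continuous_const.mul continuous_id).measurable
  have hd_meas : Measurable (fun s => Real.toNNReal ((Set.Icc A B).indicator ρ s)) :=
    (hρmeas.indicator measurableSet_Icc).real_toNNReal
  have hmax : max 0 (1 - 1/γ) = (0:ℝ) := by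
    apply max_eq_left
    have : 1 ≤ 1/γ := by
      rw [le_div_iff₀ hγ0]; linarith
    linarith
  have hMPeq : MP γ = volume.withDensity (fun s => ((((Set.Icc A B).indicator ρ s).toNNReal : NNReal) : ENNReal)) := by
    unfold MP
    rw [hmax]
    simp only [ENNReal.ofReal_zero, zero_smul, zero_add]
    congr 1
    funext s
    by_cases hs : s ∈ Set.Icc A B
    · rw [Set.indicator_of_mem hs, Set.indicator_of_mem hs, ENNReal.ofReal]
    · rw [Set.indicator_of_notMem hs, Set.indicator_of_notMem hs]
      simp
  rw [hMPeq, integral_withDensity_eq_integral_smul hd_meas]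
  have e : (fun s => (((Set.Icc A B).indicator ρ s).toNNReal : NNReal) • f s)
      = fun s => (Set.Icc A B).indicator (fun s => ρ s * f s) s := by
    funext s
    rw [NNReal.smul_def, Real.coe_toNNReal _ (hρnn s)]
    by_cases hs : s ∈ Set.Icc A B
    · rw [Set.indicator_of_mem hs, Set.indicator_of_mem hs, smul_eq_mul]
    · rw [Set.indicator_of_notMem hs, Set.indicator_of_notMem hs, zero_smul]
  rw [e, integral_indicator measurableSet_Icc]

theorem stmt17 (γ : ℝ) (hγ0 : 0 < γ) (hγ1 : γ < 1)
    (τ : ℝ) (hτ0 : 0 ≤ τ) (hτ : τ ≤ 1 - γ)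
    (lam : ℝ) (hlam : 0 ≤ lam)
    (hfp : lam ^ 2 * ∫ s, 1 / (s + lam) ^ 2 ∂(MP γ) = τ) :
    γ / (1 - γ) * (1 - Real.sqrt (τ / (1 - γ))) ^ 2 ≤
      γ * ∫ s, s / (s + lam) ^ 2 ∂(MP γ) := by
  have hπ := Real.pi_pos
  have hu : 0 < 1 - γ := by linarith
  rw [MP_transfer γ hγ0 hγ1] at hfp ⊢
  set g := Real.sqrt γ with hgdef
  have hg0 : 0 < g := Real.sqrt_pos.mpr hγ0
  have hg1 : g < 1 := by
    rw [hgdef, show (1:ℝ) = Real.sqrt 1 by simp]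
    exact Real.sqrt_lt_sqrt hγ0.le hγ1
  have hgsq : g^2 = γ := Real.sq_sqrt hγ0.le
  set a := (1-g)^2 with hadef
  set b := (1+g)^2 with hbdef
  have ha : 0 < a := by
    rw [hadef]
    have h1 : 0 < 1 - g := by linarith
    positivity
  have hab : a < b := by rw [hadef, hbdef]; nlinarith
  set ρ : ℝ → ℝ := fun s => Real.sqrt ((b - s) * (s - a)) / (2 * Real.pi * γ * s) with hρdef
  have hs_pos : ∀ s ∈ Set.Icc a b, 0 < s := fun s hs => lt_of_lt_of_le ha hs.1
  have hsl_pos : ∀ s ∈ Set.Icc a b, 0 < s + lam := fun s hs => by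
    have := hs_pos s hs; linarith
  have hρnn : ∀ s ∈ Set.Icc a b, 0 ≤ ρ s := fun s hs => by
    have := hs_pos s hs; rw [hρdef]; positivity
  have hρcont : ContinuousOn ρ (Set.Icc a b) := by
    rw [hρdef]
    exact ContinuousOn.div contQ.continuousOn (by fun_prop)
      (fun s hs => by have := hs_pos s hs; positivity)
  have hInt : ∀ f : ℝ → ℝ, ContinuousOn f (Set.Icc a b) →
      Integrable f (volume.restrict (Set.Icc a b)) := fun f hf => hf.integrableOn_Icc
  -- algebraic facts about a, b
  have habv : a*b = (1-γ)^2 := by rw [hadef, hbdef]; linear_combination (g^2+γ-2)*hgsq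
  have hapb : a+b = 2+2*γ := by rw [hadef, hbdef]; linear_combination 2*hgsq
  have hba2 : (b-a)^2 = 16*γ := by rw [hadef, hbdef]; linear_combination 16*hgsq
  have hsab : Real.sqrt (a*b) = 1-γ := by rw [habv, Real.sqrt_sq hu.le]
  -- the two moment computations
  have hA : (∫ s in Set.Icc a b, ρ s/s) = 1/(1-γ) := by
    rw [setIntegral_congr_fun measurableSet_Icc
      (show Set.EqOn (fun s => ρ s/s)
        (fun s => (1/(2*Real.pi*γ)) * (Real.sqrt ((b-s)*(s-a))/s^2)) (Set.Icc a b) from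
        fun s hs => by
          simp only [hρdef]
          rw [div_div, div_mul_div_comm, one_mul]
          congr 1
          ring)]
    rw [integral_const_mul, MeasureTheory.integral_Icc_eq_integral_Ioc,
      ← intervalIntegral.integral_of_le hab.le, int2 ha hab, hsab, hapb]
    field_simp
    ring
  have hB : (∫ s in Set.Icc a b, ρ s/s^2) = 1/(1-γ)^3 := by
    rw [setIntegral_congr_fun measurableSet_Icc
      (show Set.EqOn (fun s => ρ s/s^2)
        (fun s => (1/(2*Real.pi*γ)) * (Real.sqrt ((b-s)*(s-a))/s^3)) (Set.Icc a b) from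
        fun s hs => by
          simp only [hρdef]
          rw [div_div, div_mul_div_comm, one_mul]
          congr 1
          ring)]
    rw [integral_const_mul, MeasureTheory.integral_Icc_eq_integral_Ioc,
      ← intervalIntegral.integral_of_le hab.le, int3 ha hab, hsab, hba2,
      show (8:ℝ)*a*b*(1-γ) = 8*((1-γ)^2)*(1-γ) by rw [← habv]; ring]
    field_simp
    ring
  -- canonical integrals
  have hfp' : lam^2 * (∫ s in Set.Icc a b, ρ s/(s+lam)^2) = τ := by
    rw [← hfp]
    congr 1
    apply setIntegral_congr_fun measurableSet_Icc
    intro s hs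
    simp only [hρdef]
    ring
  set J1 := ∫ s in Set.Icc a b, ρ s/(s+lam)^2 with hJ1def
  set J2 := ∫ s in Set.Icc a b, s*ρ s/(s+lam)^2 with hJ2def
  set m := ∫ s in Set.Icc a b, ρ s/(s+lam) with hmdef
  set K := ∫ s in Set.Icc a b, ρ s/((s+lam)*s) with hKdef
  -- Cauchy-Schwarz 1 : m^2 ≤ J2 * A
  have hcs1 : m^2 ≤ J2 * (1/(1-γ)) := by
    have hc1 : ContinuousOn (fun s => Real.sqrt (s * ρ s) / (s+lam)) (Set.Icc a b) :=
      ContinuousOn.div (Real.continuous_sqrt.comp_continuousOn (continuousOn_id.mul hρcont))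
        (by fun_prop) (fun s hs => (hsl_pos s hs).ne')
    have hc2 : ContinuousOn (fun s => Real.sqrt (ρ s / s)) (Set.Icc a b) :=
      Real.continuous_sqrt.comp_continuousOn
        (hρcont.div continuousOn_id (fun s hs => (hs_pos s hs).ne'))
    have H := cs_ineq (volume.restrict (Set.Icc a b))
      (fun s => Real.sqrt (s * ρ s) / (s+lam)) (fun s => Real.sqrt (ρ s / s))
      (hInt _ (hc1.mul hc1)) (hInt _ (hc2.mul hc2)) (hInt _ (hc1.mul hc2))
    have e11 : (∫ s in Set.Icc a b,
        (Real.sqrt (s * ρ s)/(s+lam)) * Real.sqrt (ρ s / s)) = m := by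
      rw [hmdef]
      apply setIntegral_congr_fun measurableSet_Icc
      intro s hs
      dsimp only
      have h1 := hs_pos s hs
      have h3 := hρnn s hs
      rw [div_mul_eq_mul_div, ← Real.sqrt_mul (mul_nonneg h1.le h3),
        show s * ρ s * (ρ s / s) = ρ s^2 by field_simp, Real.sqrt_sq h3]
    have e12 : (∫ s in Set.Icc a b,
        (Real.sqrt (s * ρ s)/(s+lam)) * (Real.sqrt (s * ρ s)/(s+lam))) = J2 := by
      rw [hJ2def]
      apply setIntegral_congr_fun measurableSet_Icc
      intro s hs
      dsimp only
      have h1 := hs_pos s hs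
      have h3 := hρnn s hs
      rw [div_mul_div_comm, Real.mul_self_sqrt (mul_nonneg h1.le h3), ← pow_two]
    have e13 : (∫ s in Set.Icc a b,
        Real.sqrt (ρ s / s) * Real.sqrt (ρ s / s)) = 1/(1-γ) := by
      rw [← hA]
      apply setIntegral_congr_fun measurableSet_Icc
      intro s hs
      dsimp only
      have h1 := hs_pos s hs
      have h3 := hρnn s hs
      rw [Real.mul_self_sqrt (div_nonneg h3 h1.le)]
    rw [e11, e12, e13] at H
    exact H
  -- Cauchy-Schwarz 2 : K^2 ≤ J1 * B
  have hcs2 : K^2 ≤ J1 * (1/(1-γ)^3) := by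
    have hc3 : ContinuousOn (fun s => Real.sqrt (ρ s) / (s+lam)) (Set.Icc a b) :=
      ContinuousOn.div (Real.continuous_sqrt.comp_continuousOn hρcont)
        (by fun_prop) (fun s hs => (hsl_pos s hs).ne')
    have hc4 : ContinuousOn (fun s => Real.sqrt (ρ s) / s) (Set.Icc a b) :=
      ContinuousOn.div (Real.continuous_sqrt.comp_continuousOn hρcont)
        continuousOn_id (fun s hs => (hs_pos s hs).ne')
    have H := cs_ineq (volume.restrict (Set.Icc a b))
      (fun s => Real.sqrt (ρ s) / (s+lam)) (fun s => Real.sqrt (ρ s) / s)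
      (hInt _ (hc3.mul hc3)) (hInt _ (hc4.mul hc4)) (hInt _ (hc3.mul hc4))
    have e21 : (∫ s in Set.Icc a b,
        (Real.sqrt (ρ s)/(s+lam)) * (Real.sqrt (ρ s)/s)) = K := by
      rw [hKdef]
      apply setIntegral_congr_fun measurableSet_Icc
      intro s hs
      dsimp only
      have h3 := hρnn s hs
      rw [div_mul_div_comm, Real.mul_self_sqrt h3]
    have e22 : (∫ s in Set.Icc a b,
        (Real.sqrt (ρ s)/(s+lam)) * (Real.sqrt (ρ s)/(s+lam))) = J1 := by
      rw [hJ1def]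
      apply setIntegral_congr_fun measurableSet_Icc
      intro s hs
      dsimp only
      have h3 := hρnn s hs
      rw [div_mul_div_comm, Real.mul_self_sqrt h3, ← pow_two]
    have e23 : (∫ s in Set.Icc a b,
        (Real.sqrt (ρ s)/s) * (Real.sqrt (ρ s)/s)) = 1/(1-γ)^3 := by
      rw [← hB]
      apply setIntegral_congr_fun measurableSet_Icc
      intro s hs
      dsimp only
      have h3 := hρnn s hs
      rw [div_mul_div_comm, Real.mul_self_sqrt h3, ← pow_two]
    rw [e21, e22, e23] at H
    exact H
  -- partial fractions : A = m + lam * K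
  have hPF : 1/(1-γ) = m + lam * K := by
    rw [← hA, hmdef, hKdef]
    have hiK : ContinuousOn (fun s => ρ s/((s+lam)*s)) (Set.Icc a b) :=
      hρcont.div ((by fun_prop : ContinuousOn (fun s : ℝ => (s+lam)*s) (Set.Icc a b)))
        (fun s hs => by have := hs_pos s hs; have := hsl_pos s hs; positivity)
    have him : ContinuousOn (fun s => ρ s/(s+lam)) (Set.Icc a b) :=
      hρcont.div (by fun_prop) (fun s hs => (hsl_pos s hs).ne')
    rw [setIntegral_congr_fun measurableSet_Icc
      (show Set.EqOn (fun s => ρ s/s)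
        (fun s => ρ s/(s+lam) + lam * (ρ s/((s+lam)*s))) (Set.Icc a b) from
        fun s hs => by
          have h1 := hs_pos s hs
          have h2 := hsl_pos s hs
          field_simp)]
    rw [integral_add (hInt _ him) ((hInt _ hiK).const_mul lam), integral_const_mul]
  -- nonnegativity
  have hJ1nn : 0 ≤ J1 := setIntegral_nonneg measurableSet_Icc
    (fun s hs => div_nonneg (hρnn s hs) (sq_nonneg _))
  have hJ2nn : 0 ≤ J2 := setIntegral_nonneg measurableSet_Icc
    (fun s hs => div_nonneg (mul_nonneg (hs_pos s hs).le (hρnn s hs)) (sq_nonneg _))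
  have hKnn : 0 ≤ K := setIntegral_nonneg measurableSet_Icc
    (fun s hs => div_nonneg (hρnn s hs)
      (mul_nonneg (hsl_pos s hs).le (hs_pos s hs).le))
  -- final chain
  set t := Real.sqrt (τ/(1-γ)) with htdef
  have ht0 : 0 ≤ t := Real.sqrt_nonneg _
  have htsq : t^2 = τ/(1-γ) := Real.sq_sqrt (by positivity)
  have ht1 : t ≤ 1 := by
    calc t = Real.sqrt (τ/(1-γ)) := htdef
      _ ≤ Real.sqrt 1 := Real.sqrt_le_sqrt ((div_le_one hu).mpr hτ)
      _ = 1 := Real.sqrt_one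
  have hlamK2 : (lam*K)^2 ≤ τ/(1-γ)^3 := by
    have h1 : lam^2 * K^2 ≤ lam^2 * (J1 * (1/(1-γ)^3)) :=
      mul_le_mul_of_nonneg_left hcs2 (sq_nonneg lam)
    calc (lam*K)^2 = lam^2 * K^2 := by ring
      _ ≤ lam^2 * (J1 * (1/(1-γ)^3)) := h1
      _ = (lam^2 * J1) * (1/(1-γ)^3) := by ring
      _ = τ/(1-γ)^3 := by rw [hfp']; ring
  have hlamK : lam*K ≤ t/(1-γ) := by
    have h2 : (t/(1-γ))^2 = τ/(1-γ)^3 := by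
      rw [div_pow, htsq, div_div]
      congr 1
      ring
    have h5 := Real.sqrt_le_sqrt (hlamK2.trans_eq h2.symm)
    rwa [Real.sqrt_sq (mul_nonneg hlam hKnn), Real.sqrt_sq (div_nonneg ht0 hu.le)] at h5
  have hm_lb : (1-t)/(1-γ) ≤ m := by
    have e : (1-t)/(1-γ) = 1/(1-γ) - t/(1-γ) := by ring
    linarith
  have hm0 : 0 ≤ m := le_trans (div_nonneg (by linarith) hu.le) hm_lb
  have hJ2_lb : (1-t)^2/(1-γ) ≤ J2 := by
    have h1 : ((1-t)/(1-γ))^2 ≤ m^2 := pow_le_pow_left₀ (div_nonneg (by linarith) hu.le) hm_lb 2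
    have h2 : m^2 * (1-γ) ≤ J2 * (1/(1-γ)) * (1-γ) :=
      mul_le_mul_of_nonneg_right hcs1 hu.le
    have h3 : J2 * (1/(1-γ)) * (1-γ) = J2 := by field_simp
    have h4 : ((1-t)/(1-γ))^2 * (1-γ) = (1-t)^2/(1-γ) := by
      field_simp
    have h5 : ((1-t)/(1-γ))^2 * (1-γ) ≤ m^2 * (1-γ) := mul_le_mul_of_nonneg_right h1 hu.le
    have h6 : m^2 * (1-γ) ≤ J2 := by
      calc m^2 * (1-γ) ≤ J2 * (1/(1-γ)) * (1-γ) := mul_le_mul_of_nonneg_right hcs1 hu.le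
        _ = J2 := h3
    linarith
  have hgoal : (∫ s in Set.Icc a b,
      Real.sqrt ((b - s) * (s - a)) / (2 * Real.pi * γ * s) * (s/(s+lam)^2)) = J2 := by
    rw [hJ2def]
    apply setIntegral_congr_fun measurableSet_Icc
    intro s hs
    simp only [hρdef]
    ring
  rw [hgoal]
  calc γ/(1-γ)*(1-t)^2 = γ * ((1-t)^2/(1-γ)) := by ring
    _ ≤ γ * J2 := mul_le_mul_of_nonneg_left hJ2_lb hγ0.le
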